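/- Let H_k^d be the set of Gaussian distributions N(μ, I_d) on ℝ^d with k-sparse mean μ. The family of Scheffé sets of H_k^d, i.e. the family of sets w(μ,ν) = {x ∈ ℝ^d : p_μ(x) > p_ν(x)} where p_μ, p_ν are the densities of N(μ, I_d), N(ν, I_d) and μ, ν range over k-sparse vectors, has VC dimension at most 4k·log(de). -/

import Mathlib

noncomputable section

/-- A family `W` of subsets of `α` shatters a finite set `A` if every subset of `A`
is cut out by some member of `W`. -/
def ShattersSet {α : Type*} (W : Set (Set α)) (A : Finset α) : Prop :=
  ∀ B ⊆ A, ∃ w ∈ W, ∀ a ∈ A, (a ∈ B ↔ a ∈ w)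

/-- A vector is `k`-sparse if it has at most `k` nonzero coordinates. -/
def Sparse {d : ℕ} (k : ℕ) (x : Fin d → ℝ) : Prop :=
  (Finset.univ.filter fun i => x i ≠ 0).card ≤ k

/-- The Lebesgue density of `N(μ, I_d)`. -/
def gaussDensity {d : ℕ} (μ : Fin d → ℝ) (x : Fin d → ℝ) : ℝ :=
  (2 * Real.pi) ^ (-(d : ℝ) / 2) * Real.exp (-(∑ i, (x i - μ i) ^ 2) / 2)

/-- The family of Scheffé sets `w(μ,ν) = {x : p_μ(x) > p_ν(x)}` of the class of Gaussians
`N(μ, I_d)` with `k`-sparse means. -/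
def scheffeSets (d k : ℕ) : Set (Set (Fin d → ℝ)) :=
  { w | ∃ μ ν : Fin d → ℝ, Sparse k μ ∧ Sparse k ν ∧
        w = { x | gaussDensity ν x < gaussDensity μ x } }

open Finset Module

-- ===================== Nat combinatorial lemmas =====================

lemma pascal_sum (m s : ℕ) :
    ∑ i ∈ range (s + 1), (m + 1).choose i
      = ∑ i ∈ range (s + 1), m.choose i + ∑ i ∈ range s, m.choose i := by
  rw [Finset.sum_range_succ' (fun i => (m+1).choose i) s]
  simp only [Nat.choose_succ_succ, Nat.choose_zero_right]
  rw [Finset.sum_add_distrib]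
  rw [Finset.sum_range_succ' (fun i => m.choose i) s]
  simp [Nat.succ_eq_add_one]
  ring

lemma doubling_choose (N r j : ℕ) (h : 3 * r ≤ N) (hj : j ≤ r) :
    2 ^ j * N.choose (r - j) ≤ N.choose r := by
  induction j with
  | zero => simpa using le_rfl
  | succ j ih =>
    have hj' : j ≤ r := Nat.le_of_succ_le hj
    have key : 2 * N.choose (r - (j+1)) ≤ N.choose (r - j) := by
      -- r - (j+1) = (r - j) - 1 ; set i := r - (j+1), then r - j = i+1
      obtain ⟨i, hi⟩ : ∃ i, r - j = i + 1 := ⟨r - (j+1), by omega⟩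
      have hij : r - (j+1) = i := by omega
      rw [hij, hi]
      -- C(N,i+1)*(i+1) = C(N,i)*(N-i)
      have hid : N.choose (i+1) * (i+1) = N.choose i * (N - i) := Nat.choose_succ_right_eq N i
      have hNi : 2 * (i + 1) ≤ N - i := by omega
      have hpos : 0 < N - i := by omega
      -- 2 * C(N,i) * (N - i) = 2 * (i+1) * C(N,i+1) ≤ (N-i) * C(N,i+1)
      have h1 : 2 * N.choose i * (N - i) ≤ N.choose (i+1) * (N - i) := by
        calc 2 * N.choose i * (N - i) = 2 * (i+1) * N.choose (i+1) := by
              rw [mul_assoc, ← hid]; ring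
          _ ≤ (N - i) * N.choose (i+1) := Nat.mul_le_mul_right _ hNi
          _ = N.choose (i+1) * (N - i) := by ring
      exact Nat.le_of_mul_le_mul_right h1 hpos
    calc 2 ^ (j+1) * N.choose (r - (j+1)) = 2 ^ j * (2 * N.choose (r - (j+1))) := by ring
      _ ≤ 2 ^ j * N.choose (r - j) := Nat.mul_le_mul_left _ key
      _ ≤ N.choose r := ih hj'

lemma sum_choose_le_two_choose (N r : ℕ) (h : 3 * r ≤ N) :
    ∑ i ∈ range (r + 1), N.choose i ≤ 2 * N.choose r := by
  have key : ∀ i ∈ range (r+1), 2 ^ r * N.choose i ≤ 2 ^ i * N.choose r := by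
    intro i hi
    have hir : i ≤ r := by simpa [Nat.lt_succ_iff] using hi
    have := doubling_choose N r (r - i) h (Nat.sub_le _ _)
    have hri : r - (r - i) = i := by omega
    rw [hri] at this
    calc 2 ^ r * N.choose i = 2 ^ i * (2 ^ (r - i) * N.choose i) := by
          rw [← mul_assoc, ← pow_add]; congr 2; omega
      _ ≤ 2 ^ i * N.choose r := Nat.mul_le_mul_left _ this
  have h1 : 2 ^ r * ∑ i ∈ range (r+1), N.choose i ≤ (2 ^ (r+1) - 1) * N.choose r := by
    rw [Finset.mul_sum]
    calc ∑ i ∈ range (r+1), 2 ^ r * N.choose i ≤ ∑ i ∈ range (r+1), 2 ^ i * N.choose r :=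
          Finset.sum_le_sum key
      _ = (∑ i ∈ range (r+1), 2 ^ i) * N.choose r := by rw [Finset.sum_mul]
      _ = (2 ^ (r+1) - 1) * N.choose r := by rw [Nat.geomSum_eq (le_refl 2)]; simp
  by_contra hcon
  push_neg at hcon
  have h2 : 2 * N.choose r + 1 ≤ ∑ i ∈ range (r+1), N.choose i := hcon
  have h3 : 2 ^ r * (2 * N.choose r + 1) ≤ 2 ^ r * ∑ i ∈ range (r+1), N.choose i :=
    Nat.mul_le_mul_left _ h2
  have h4 : (2 ^ (r+1) - 1) * N.choose r < 2 ^ r * (2 * N.choose r + 1) := by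
    have hp : 0 < 2 ^ r := Nat.pow_pos (n := r) (by norm_num)
    have : 2 ^ (r+1) = 2 * 2 ^ r := by ring
    calc (2 ^ (r+1) - 1) * N.choose r ≤ 2 ^ (r+1) * N.choose r := by
          exact Nat.mul_le_mul_right _ (Nat.sub_le _ _)
      _ = 2 ^ r * (2 * N.choose r) := by rw [this]; ring
      _ < 2 ^ r * (2 * N.choose r + 1) := by
          exact Nat.mul_lt_mul_of_le_of_lt (le_refl _) (by omega) hp
  omega

lemma sum_choose_eq_pow (n s : ℕ) (hn : 1 ≤ n) (h : n ≤ s + 1) :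
    ∑ i ∈ range (s + 1), (n - 1).choose i = 2 ^ (n - 1) := by
  have h1 : ∑ i ∈ range n, (n-1).choose i = 2 ^ (n-1) := by
    have := Nat.sum_range_choose (n - 1)
    have hn' : n - 1 + 1 = n := by omega
    rwa [hn'] at this
  rw [← h1]
  symm
  apply Finset.sum_subset
  · intro i hi; simp only [mem_range] at *; omega
  · intro i _ hi
    simp only [mem_range, not_lt] at hi
    exact Nat.choose_eq_zero_of_lt (by omega)

lemma sum_choose_lt_pow (n s : ℕ) (hs : 1 ≤ s) (h : s + 1 < n) :
    ∑ i ∈ range (s + 1), (n - 1).choose i < 2 ^ (n - 1) := by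
  have h1 : ∑ i ∈ range n, (n-1).choose i = 2 ^ (n-1) := by
    have := Nat.sum_range_choose (n - 1)
    have hn' : n - 1 + 1 = n := by omega
    rwa [hn'] at this
  rw [← h1]
  apply Finset.sum_lt_sum_of_subset (by intro i hi; simp only [mem_range] at *; omega)
    (i := s + 1) (by simp; omega) (by simp)
  · exact Nat.choose_pos (by omega)
  · intro j _ _; exact Nat.zero_le _

-- ===================== Real analytic lemmas =====================

open Real

lemma exp_half_lt : Real.exp (1/2 : ℝ) < 1.64873 := by
  have h : Real.exp (1/2 : ℝ) ^ 2 < (1.64873 : ℝ)^2 := by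
    have h2 : Real.exp (1/2 : ℝ) ^ 2 = Real.exp 1 := by
      rw [sq, ← Real.exp_add]; norm_num
    rw [h2]
    calc Real.exp 1 < 2.7182818286 := Real.exp_one_lt_d9
      _ < (1.64873 : ℝ)^2 := by norm_num
  exact lt_of_pow_lt_pow_left₀ 2 (by norm_num) h

lemma exp_fact_le (k : ℕ) (hk : 2 ≤ k) : Real.exp ((k : ℝ) + 1/2) ≤ ((2*k).factorial : ℝ) := by
  induction k with
  | zero => omega
  | succ k ih =>
    rcases Nat.lt_or_ge k 2 with hk2 | hk2
    · -- k + 1 = 2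
      have hk1 : k = 1 := by omega
      subst hk1
      have h : Real.exp ((2:ℝ) + 1/2) ^ 2 ≤ (24 : ℝ)^2 := by
        have h2 : Real.exp ((2:ℝ) + 1/2) ^ 2 = Real.exp 1 ^ 5 := by
          rw [sq, ← Real.exp_add, show ((2:ℝ)+1/2+(2+1/2)) = ((5:ℕ):ℝ) by norm_num,
            ← Real.exp_one_pow]
        rw [h2]
        calc Real.exp 1 ^ 5 ≤ (2.7182818286 : ℝ)^5 := by
              apply pow_le_pow_left₀ (Real.exp_pos 1).le Real.exp_one_lt_d9.le
          _ ≤ (24 : ℝ)^2 := by norm_num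
      have := le_of_pow_le_pow_left₀ (by norm_num) (by norm_num : (0:ℝ) ≤ 24) h
      have heq : ((((1:ℕ)+1:ℕ)):ℝ) + 1/2 = ((2:ℝ) + 1/2) := by norm_num
      rw [heq]
      exact le_trans this (by norm_num [Nat.factorial])
    · have ih' := ih hk2
      have step : ((2*(k+1)).factorial : ℝ) = ((2*k).factorial : ℝ) * ((2*k+1) * (2*k+2)) := by
        have : 2*(k+1) = (2*k+1) + 1 := by ring
        rw [this, Nat.factorial_succ]
        have : 2*k+1 = (2*k) + 1 := by ring
        rw [this, Nat.factorial_succ]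
        push_cast; ring
      have he : Real.exp (((k:ℝ)+1) + 1/2) = Real.exp ((k:ℝ) + 1/2) * Real.exp 1 := by
        rw [← Real.exp_add]; ring_nf
      have hexp1 : Real.exp 1 ≤ ((2*k+1) * (2*k+2) : ℝ) := by
        have h1 : Real.exp 1 < 3 := by
          calc Real.exp 1 < 2.7182818286 := Real.exp_one_lt_d9
            _ < 3 := by norm_num
        have h2 : (3:ℝ) ≤ (2*k+1) * (2*k+2) := by
          have : (2:ℝ) ≤ (k:ℝ) := by exact_mod_cast hk2
          nlinarith
        linarith
      push_cast
      calc Real.exp ((k:ℝ) + 1 + 1/2) = Real.exp ((k:ℝ) + 1/2) * Real.exp 1 := by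
            rw [← Real.exp_add]; ring_nf
        _ ≤ ((2*k).factorial : ℝ) * (((2*k+1) * (2*k+2) : ℕ) : ℝ) := by
            apply mul_le_mul ih' ?_ (Real.exp_pos 1).le (Nat.cast_nonneg _)
            · exact le_trans hexp1 (by push_cast; ring_nf; exact le_refl _)
        _ = ((2*(k+1)).factorial : ℝ) := by
            rw [step]; push_cast; ring

lemma exp_le_div_one_sub (x : ℝ) (hx : x < 1) : Real.exp x ≤ 1/(1-x) := by
  have h1 := Real.add_one_le_exp (-x)
  have h2 : 0 < 1 - x := by linarith
  have h3 : Real.exp x * (1 - x) ≤ 1 := by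
    calc Real.exp x * (1-x) = Real.exp x * (-x+1) := by ring
      _ ≤ Real.exp x * Real.exp (-x) := mul_le_mul_of_nonneg_left h1 (Real.exp_pos x).le
      _ = 1 := by rw [← Real.exp_add]; simp
  rw [le_div_iff₀ h2]; linarith

lemma log_fact_ge (k : ℕ) (hk : 2 ≤ k) :
    0.6932 + (k:ℝ) * Real.log (2*(k:ℝ)) - 0.25*(k:ℝ) ≤ Real.log ((2*k).factorial : ℝ) := by
  induction k with
  | zero => omega
  | succ k ih =>
    rcases Nat.lt_or_ge k 2 with hk2 | hk2
    · have hk1 : k = 1 := by omega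
      subst hk1
      have hfact : ((2*(1+1)).factorial : ℝ) = 24 := by norm_num [Nat.factorial]
      rw [hfact]
      have h24 : Real.log 24 = Real.log ((2*((1:ℕ)+1):ℝ)^2) + Real.log (3/2) := by
        rw [← Real.log_mul (by norm_num) (by norm_num)]
        norm_num
      have hpow : Real.log ((2*((1:ℕ)+1):ℝ)^2) = 2 * Real.log (2*((1:ℕ)+1):ℝ) := by
        rw [Real.log_pow]; norm_num
      have h32 : (0.1932:ℝ) ≤ Real.log (3/2) := by
        rw [Real.le_log_iff_exp_le (by norm_num)]
        calc Real.exp (0.1932:ℝ) ≤ 1/(1-0.1932) := exp_le_div_one_sub _ (by norm_num)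
          _ ≤ 3/2 := by norm_num
      push_cast at h24 hpow ⊢
      rw [h24, hpow]
      linarith
    · have ih' := ih hk2
      have hkpos : (0:ℝ) < k := by exact_mod_cast (show 0 < k by omega)
      have hk2' : (2:ℝ) ≤ k := by exact_mod_cast hk2
      -- factorial expansion
      have hfe : Real.log ((2*(k+1)).factorial : ℝ)
          = Real.log ((2*k).factorial : ℝ) + Real.log (2*(k:ℝ)+1) + Real.log (2*(k:ℝ)+2) := by
        have h1 : (2*(k+1)) = (2*k+1) + 1 := by ring
        have h2 : ((2*(k+1)).factorial : ℝ) = ((2*k).factorial : ℝ) * (2*(k:ℝ)+1) * (2*(k:ℝ)+2) := by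
          rw [h1, Nat.factorial_succ, show 2*k+1 = (2*k)+1 from rfl, Nat.factorial_succ]
          push_cast; ring
        rw [h2, Real.log_mul (by positivity) (by positivity), Real.log_mul (by positivity) (by positivity)]
      -- log ratio
      have hratio : Real.log (2*(k:ℝ)+2) - Real.log (2*(k:ℝ)) = Real.log (1 + 1/(k:ℝ)) := by
        rw [← Real.log_div (by positivity) (by positivity)]
        congr 1
        field_simp
      have hlog_le : Real.log (1 + 1/(k:ℝ)) ≤ 1/(k:ℝ) := by
        have := Real.log_le_sub_one_of_pos (show (0:ℝ) < 1 + 1/(k:ℝ) by positivity)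
        linarith
      have hklog : (k:ℝ) * Real.log (1 + 1/(k:ℝ)) ≤ 1 := by
        calc (k:ℝ) * Real.log (1 + 1/(k:ℝ)) ≤ (k:ℝ) * (1/(k:ℝ)) :=
              mul_le_mul_of_nonneg_left hlog_le hkpos.le
          _ = 1 := by field_simp
      have hklog' : (k:ℝ) * Real.log (2*(k:ℝ)+2) - (k:ℝ) * Real.log (2*(k:ℝ)) ≤ 1 := by
        have : (k:ℝ) * (Real.log (2*(k:ℝ)+2) - Real.log (2*(k:ℝ)))
            = (k:ℝ) * Real.log (1 + 1/(k:ℝ)) := by rw [hratio]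
        nlinarith [hklog]
      have h2k1 : (0.75:ℝ) ≤ Real.log (2*(k:ℝ)+1) := by
        have h5 : (5:ℝ) ≤ 2*(k:ℝ)+1 := by linarith
        have hlog5 : (0.75:ℝ) ≤ Real.log 5 := by
          rw [Real.le_log_iff_exp_le (by norm_num)]
          calc Real.exp (0.75:ℝ) ≤ Real.exp 1 := by
                apply Real.exp_le_exp.mpr; norm_num
            _ ≤ 2.7182818286 := Real.exp_one_lt_d9.le
            _ ≤ 5 := by norm_num
        exact hlog5.trans (Real.log_le_log (by norm_num) h5)
      rw [hfe]
      push_cast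
      rw [show (2:ℝ)*((k:ℝ)+1) = 2*(k:ℝ)+2 by ring]
      nlinarith [hklog', h2k1, ih']
  

lemma c_pos : (0.1931471803:ℝ) < Real.log 2 - 1/2 := by
  have := Real.log_two_gt_d9
  linarith

lemma log_c_ge : (-1.75:ℝ) ≤ Real.log (Real.log 2 - 1/2) := by
  have hc : (0.1931471803:ℝ) < Real.log 2 - 1/2 := c_pos
  rw [Real.le_log_iff_exp_le (by linarith)]
  have h74 : (5.1776:ℝ) ≤ Real.exp (7/4) := by
    have hp : (5.1776:ℝ)^4 ≤ Real.exp (7/4) ^ 4 := by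
      have h1 : Real.exp (7/4) ^ 4 = Real.exp 1 ^ 7 := by
        rw [← Real.exp_nat_mul, show ((4:ℕ):ℝ) * (7/4) = ((7:ℕ):ℝ) by norm_num,
          ← Real.exp_one_pow]
      rw [h1]
      calc (5.1776:ℝ)^4 ≤ (2.7182818283:ℝ)^7 := by norm_num
        _ ≤ Real.exp 1 ^ 7 := by
            apply pow_le_pow_left₀ (by norm_num) Real.exp_one_gt_d9.le
    exact le_of_pow_le_pow_left₀ (by norm_num) (Real.exp_pos _).le hp
  have : Real.exp (-1.75:ℝ) = (Real.exp (7/4))⁻¹ := by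
    rw [← Real.exp_neg]; norm_num
  rw [this]
  have h1 : (Real.exp (7/4))⁻¹ ≤ (5.1776:ℝ)⁻¹ := by
    apply inv_anti₀ (by norm_num) h74
  calc (Real.exp (7/4))⁻¹ ≤ (5.1776:ℝ)⁻¹ := h1
    _ ≤ 0.1931471803 := by norm_num
    _ ≤ Real.log 2 - 1/2 := hc.le

lemma tangent_log (x m : ℝ) (hx : 0 < x) (hm : 0 < m) :
    Real.log x ≤ Real.log m + (x/m - 1) := by
  have h1 : Real.log (x/m) ≤ x/m - 1 := Real.log_le_sub_one_of_pos (by positivity)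
  rw [Real.log_div hx.ne' hm.ne'] at h1
  linarith

-- k = 1 special branch
lemma k1_base_aux (m : ℕ) (c : ℝ) (hc : 0 ≤ c)
    (hnum : (2.7182818286:ℝ)^m * c^2 < 4^(m+1) * (2.7182818283:ℝ)^4) :
    Real.exp ((m:ℝ)/2) * c < 2^(m+1) * Real.exp 2 := by
  have hsq : (Real.exp ((m:ℝ)/2) * c)^2 < (2^(m+1) * Real.exp 2)^2 := by
    have e1 : (Real.exp ((m:ℝ)/2))^2 = Real.exp 1 ^ m := by
      rw [sq, ← Real.exp_add, show (m:ℝ)/2 + (m:ℝ)/2 = ((m:ℕ):ℝ) by push_cast; ring,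
        ← Real.exp_one_pow]
    have e2 : (Real.exp (2:ℝ))^2 = Real.exp 1 ^ 4 := by
      rw [sq, ← Real.exp_add, show (2:ℝ) + 2 = ((4:ℕ):ℝ) by norm_num, ← Real.exp_one_pow]
    rw [mul_pow, mul_pow, e1, e2]
    calc Real.exp 1 ^ m * c^2 ≤ (2.7182818286:ℝ)^m * c^2 := by
          apply mul_le_mul_of_nonneg_right _ (sq_nonneg c)
          apply pow_le_pow_left₀ (Real.exp_pos 1).le Real.exp_one_lt_d9.le
      _ < 4^(m+1) * (2.7182818283:ℝ)^4 := hnum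
      _ ≤ 4^(m+1) * Real.exp 1 ^ 4 := by
          apply mul_le_mul_of_nonneg_left _ (by positivity)
          apply pow_le_pow_left₀ (by norm_num) Real.exp_one_gt_d9.le
      _ = (2^(m+1))^2 * Real.exp 1 ^ 4 := by
          rw [← pow_mul, show (m+1)*2 = 2*(m+1) from by ring, pow_mul]; norm_num
  have hb : (0:ℝ) ≤ 2^(m+1) * Real.exp 2 := by positivity
  exact lt_of_pow_lt_pow_left₀ 2 hb hsq

lemma k1_main (n : ℕ) (hn : 1 ≤ n) :
    Real.exp ((n:ℝ)/2) * ((n:ℝ)^2 - n + 2) < 2^(n+1) * Real.exp 2 := by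
  -- first handle n ≤ 11, then induct
  have base : ∀ m : ℕ, 1 ≤ m → m ≤ 11 →
      Real.exp ((m:ℝ)/2) * ((m:ℝ)^2 - m + 2) < 2^(m+1) * Real.exp 2 := by
    intro m h1 h11
    interval_cases m
    · exact lt_of_lt_of_le (by
        have := k1_base_aux 1 2 (by norm_num) (by norm_num)
        norm_num at this ⊢; linarith) (le_refl _)
    · have := k1_base_aux 2 4 (by norm_num) (by norm_num); norm_num at this ⊢; linarith
    · have := k1_base_aux 3 8 (by norm_num) (by norm_num); norm_num at this ⊢; linarith
    · have := k1_base_aux 4 14 (by norm_num) (by norm_num); norm_num at this ⊢; linarith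
    · have := k1_base_aux 5 22 (by norm_num) (by norm_num); norm_num at this ⊢; linarith
    · have := k1_base_aux 6 32 (by norm_num) (by norm_num); norm_num at this ⊢; linarith
    · have := k1_base_aux 7 44 (by norm_num) (by norm_num); norm_num at this ⊢; linarith
    · have := k1_base_aux 8 58 (by norm_num) (by norm_num); norm_num at this ⊢; linarith
    · have := k1_base_aux 9 74 (by norm_num) (by norm_num); norm_num at this ⊢; linarith
    · have := k1_base_aux 10 92 (by norm_num) (by norm_num); norm_num at this ⊢; linarith
    · have := k1_base_aux 11 112 (by norm_num) (by norm_num); norm_num at this ⊢; linarith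
  rcases le_or_gt n 11 with h | h
  · exact base n hn h
  · -- induction from 11
    clear hn
    induction n with
    | zero => omega
    | succ n ih =>
      rcases le_or_gt n 10 with hn10 | hn10
      · have hn11 : n + 1 = 11 := by omega
        rw [hn11] at h; omega
      · have hn11 : 11 ≤ n := by omega
        have prev : Real.exp ((n:ℝ)/2) * ((n:ℝ)^2 - n + 2) < 2^(n+1) * Real.exp 2 := by
          rcases le_or_gt n 11 with h11 | h11
          · have : n = 11 := by omega
            subst this; exact base 11 (by norm_num) (by norm_num)
          · exact ih h11
        have hnR : (11:ℝ) ≤ (n:ℝ) := by exact_mod_cast hn11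
        have hkey : Real.exp (1/2:ℝ) * (((n:ℝ)+1)^2 - ((n:ℝ)+1) + 2)
            ≤ 2 * ((n:ℝ)^2 - n + 2) := by
          have he := exp_half_lt
          have hq : (((n:ℝ)+1)^2 - ((n:ℝ)+1) + 2) = (n:ℝ)^2 + (n:ℝ) + 2 := by ring
          rw [hq]
          have hqpos : (0:ℝ) ≤ (n:ℝ)^2 + (n:ℝ) + 2 := by positivity
          calc Real.exp (1/2:ℝ) * ((n:ℝ)^2 + (n:ℝ) + 2)
              ≤ 1.64873 * ((n:ℝ)^2 + (n:ℝ) + 2) := by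
                apply mul_le_mul_of_nonneg_right he.le hqpos
            _ ≤ 2 * ((n:ℝ)^2 - n + 2) := by nlinarith [hnR]
        calc Real.exp (((n+1:ℕ):ℝ)/2) * (((n+1:ℕ):ℝ)^2 - ((n+1:ℕ):ℝ) + 2)
            = Real.exp ((n:ℝ)/2) * (Real.exp (1/2:ℝ) * (((n:ℝ)+1)^2 - ((n:ℝ)+1) + 2)) := by
              rw [show Real.exp ((n:ℝ)/2) * (Real.exp (1/2:ℝ) * (((n:ℝ)+1)^2 - ((n:ℝ)+1) + 2))
                  = (Real.exp ((n:ℝ)/2) * Real.exp (1/2:ℝ)) * (((n:ℝ)+1)^2 - ((n:ℝ)+1) + 2) by ring,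
                ← Real.exp_add]
              push_cast
              ring_nf
          _ ≤ Real.exp ((n:ℝ)/2) * (2 * ((n:ℝ)^2 - n + 2)) :=
              mul_le_mul_of_nonneg_left hkey (Real.exp_pos _).le
          _ = 2 * (Real.exp ((n:ℝ)/2) * ((n:ℝ)^2 - n + 2)) := by ring
          _ < 2 * (2^(n+1) * Real.exp 2) := by linarith [prev]
          _ = 2^(n+1+1) * Real.exp 2 := by ring

lemma sum3_identity (m : ℕ) :
    2 * (∑ i ∈ range 3, m.choose i) + (m+1) = (m+1)*(m+1) + 2 := by
  induction m with
  | zero => decide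
  | succ m ih =>
    have hp : ∑ i ∈ range 3, (m+1).choose i
        = ∑ i ∈ range 3, m.choose i + ∑ i ∈ range 2, m.choose i := pascal_sum m 2
    have h2 : ∑ i ∈ range 2, m.choose i = m + 1 := by
      simp [Finset.sum_range_succ]
      omega
    rw [hp, h2]
    ring_nf
    ring_nf at ih
    omega

lemma star (k n : ℕ) (hk : 1 ≤ k) (hn : 1 ≤ n) :
    2 * Real.exp ((n:ℝ)/2) * ((∑ i ∈ range (2*k+1), (n-1).choose i : ℕ) : ℝ)
      < 2^n * Real.exp (2*(k:ℝ)) * ((2*k).factorial : ℝ) := by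
  rcases Nat.lt_or_ge k 2 with hk1 | hk2
  · -- k = 1
    have hk1' : k = 1 := by omega
    subst hk1'
    have hid := sum3_identity (n-1)
    have hmn : n - 1 + 1 = n := by omega
    rw [hmn] at hid
    have hidR : 2 * ((∑ i ∈ range 3, (n-1).choose i : ℕ) : ℝ) = (n:ℝ)^2 - n + 2 := by
      have h' : ((2 * (∑ i ∈ range 3, (n-1).choose i) + n : ℕ) : ℝ) = ((n*n + 2 : ℕ) : ℝ) := by
        rw [hid]
      push_cast at h' ⊢
      nlinarith [h']
    have hmain := k1_main n hn
    have hgoal_lhs : 2 * Real.exp ((n:ℝ)/2) * ((∑ i ∈ range (2*1+1), (n-1).choose i : ℕ) : ℝ)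
        = Real.exp ((n:ℝ)/2) * ((n:ℝ)^2 - n + 2) := by
      rw [show (2*1+1) = 3 from rfl, ← hidR]; ring
    have hgoal_rhs : (2:ℝ)^n * Real.exp (2*((1:ℕ):ℝ)) * (((2*1).factorial : ℕ) : ℝ)
        = 2^(n+1) * Real.exp 2 := by
      norm_num [Nat.factorial]
      ring
    rw [hgoal_lhs, hgoal_rhs]
    exact k1_main n hn
  · -- k ≥ 2
    set F : ℝ := ((2*k).factorial : ℝ) with hF
    have hFpos : (0:ℝ) < F := by
      rw [hF]; exact_mod_cast Nat.factorial_pos _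
    have hF1 : (1:ℝ) ≤ F := by
      rw [hF]; exact_mod_cast Nat.one_le_iff_ne_zero.mpr (Nat.factorial_ne_zero _)
    have hkR : (2:ℝ) ≤ (k:ℝ) := by exact_mod_cast hk2
    have h2npos : (0:ℝ) < (2:ℝ)^n := by positivity
    rcases Nat.lt_or_ge n (6*k+2) with hcase | hcase
    · -- n ≤ 6k+1 : easy region
      have hnle : n ≤ 6*k+1 := by omega
      have hexp_le : Real.exp ((n:ℝ)/2) ≤ Real.exp (2*(k:ℝ)) * F := by
        have h1 : (n:ℝ)/2 ≤ 2*(k:ℝ) + ((k:ℝ) + 1/2) := by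
          have : (n:ℝ) ≤ 6*(k:ℝ)+1 := by exact_mod_cast hnle
          linarith
        calc Real.exp ((n:ℝ)/2) ≤ Real.exp (2*(k:ℝ) + ((k:ℝ) + 1/2)) := Real.exp_le_exp.mpr h1
          _ = Real.exp (2*(k:ℝ)) * Real.exp ((k:ℝ) + 1/2) := Real.exp_add _ _
          _ ≤ Real.exp (2*(k:ℝ)) * F := by
              apply mul_le_mul_of_nonneg_left (exp_fact_le k hk2) (Real.exp_pos _).le
      rcases Nat.lt_or_ge n (2*k+2) with hsml | hbig
      · -- n ≤ 2k+1 : sum is full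
        have hSeq : ∑ i ∈ range (2*k+1), (n-1).choose i = 2^(n-1) := by
          apply sum_choose_eq_pow n (2*k) hn (by omega)
        rw [hSeq]
        have hcast : ((2^(n-1) : ℕ) : ℝ) = 2^(n-1) := by push_cast; ring
        rw [hcast]
        have h2n : (2:ℝ) * 2^(n-1) = 2^n := by
          rw [← pow_succ']
          congr 1
          omega
        have hstrict : Real.exp ((n:ℝ)/2) < Real.exp (2*(k:ℝ)) * F := by
          have h1 : (n:ℝ)/2 < 2*(k:ℝ) := by
            have : (n:ℝ) ≤ 2*(k:ℝ)+1 := by exact_mod_cast (show n ≤ 2*k+1 by omega)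
            linarith
          calc Real.exp ((n:ℝ)/2) < Real.exp (2*(k:ℝ)) := Real.exp_lt_exp.mpr h1
            _ ≤ Real.exp (2*(k:ℝ)) * F := le_mul_of_one_le_right (Real.exp_pos _).le hF1
        calc 2 * Real.exp ((n:ℝ)/2) * 2^(n-1) = 2^n * Real.exp ((n:ℝ)/2) := by
              rw [← h2n]; ring
          _ < 2^n * (Real.exp (2*(k:ℝ)) * F) := by
              exact (mul_lt_mul_iff_right₀ h2npos).mpr hstrict
          _ = 2^n * Real.exp (2*(k:ℝ)) * F := by ring
      · -- 2k+2 ≤ n ≤ 6k+1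
        have hSlt : ∑ i ∈ range (2*k+1), (n-1).choose i < 2^(n-1) := by
          apply sum_choose_lt_pow n (2*k) (by omega) (by omega)
        have hSltR : ((∑ i ∈ range (2*k+1), (n-1).choose i : ℕ) : ℝ) < 2^(n-1) := by
          calc ((∑ i ∈ range (2*k+1), (n-1).choose i : ℕ) : ℝ) < ((2^(n-1) : ℕ) : ℝ) := by
                exact_mod_cast hSlt
            _ = 2^(n-1) := by push_cast; ring
        have h2n : (2:ℝ) * 2^(n-1) = 2^n := by
          rw [← pow_succ']
          congr 1
          omega
        calc 2 * Real.exp ((n:ℝ)/2) * ((∑ i ∈ range (2*k+1), (n-1).choose i : ℕ) : ℝ)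
            < 2 * Real.exp ((n:ℝ)/2) * 2^(n-1) := by
              apply (mul_lt_mul_iff_right₀ (by positivity)).mpr hSltR
          _ = 2^n * Real.exp ((n:ℝ)/2) := by rw [← h2n]; ring
          _ ≤ 2^n * (Real.exp (2*(k:ℝ)) * F) := by
              exact mul_le_mul_of_nonneg_left hexp_le h2npos.le
          _ = 2^n * Real.exp (2*(k:ℝ)) * F := by ring
    · -- n ≥ 6k+2 : main region
      set N : ℕ := n - 1 with hN
      have hNn : ((N:ℕ):ℝ) = (n:ℝ) - 1 := by
        rw [hN]; push_cast [Nat.cast_sub hn]; ring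
      have hNpos : (0:ℝ) < ((N:ℕ):ℝ) := by
        rw [hNn]
        have : (14:ℝ) ≤ (n:ℝ) := by exact_mod_cast (show 14 ≤ n by omega)
        linarith
      have hS2 : ((∑ i ∈ range (2*k+1), (n-1).choose i : ℕ) : ℝ) ≤ 2 * (N.choose (2*k) : ℝ) := by
        have := sum_choose_le_two_choose N (2*k) (by omega)
        exact_mod_cast this
      have hCF : (N.choose (2*k) : ℝ) * F ≤ ((N:ℕ):ℝ)^(2*k) := by
        have h1 : (2*k).factorial * N.choose (2*k) ≤ N^(2*k) := by
          rw [← Nat.descFactorial_eq_factorial_mul_choose]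
          exact Nat.descFactorial_le_pow _ _
        rw [hF]
        calc (N.choose (2*k) : ℝ) * ((2*k).factorial : ℝ)
            = (((2*k).factorial * N.choose (2*k) : ℕ) : ℝ) := by push_cast; ring
          _ ≤ ((N^(2*k) : ℕ) : ℝ) := by exact_mod_cast h1
          _ = ((N:ℕ):ℝ)^(2*k) := by push_cast; ring
      -- the key exponential inequality
      obtain ⟨c, hc⟩ : ∃ c : ℝ, c = Real.log 2 - 1/2 := ⟨_, rfl⟩
      have hcpos : (0:ℝ) < c := by rw [hc]; linarith [c_pos]
      have key : 4 * Real.exp ((n:ℝ)/2) * ((N:ℕ):ℝ)^(2*k)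
          < 2^n * Real.exp (2*(k:ℝ)) * F^2 := by
        have hA1 : 4 * Real.exp ((n:ℝ)/2) * ((N:ℕ):ℝ)^(2*k)
            = Real.exp (Real.log 4 + (n:ℝ)/2 + (2*k:ℕ) * Real.log ((N:ℕ):ℝ)) := by
          rw [Real.exp_add, Real.exp_add, Real.exp_log (by norm_num : (0:ℝ) < 4),
            Real.exp_nat_mul, Real.exp_log hNpos]
        have hA2 : (2:ℝ)^n * Real.exp (2*(k:ℝ)) * F^2
            = Real.exp ((n:ℕ) * Real.log 2 + 2*(k:ℝ) + (2:ℕ) * Real.log F) := by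
          rw [Real.exp_add, Real.exp_add, Real.exp_nat_mul, Real.exp_log (by norm_num : (0:ℝ) < 2),
            Real.exp_nat_mul, Real.exp_log hFpos]
        rw [hA1, hA2]
        apply Real.exp_lt_exp.mpr
        push_cast
        -- tangent bound
        have hm : (0:ℝ) < 2*(k:ℝ)/c := by positivity
        have htan := tangent_log ((N:ℕ):ℝ) (2*(k:ℝ)/c) hNpos hm
        have hlogm : Real.log (2*(k:ℝ)/c) = Real.log (2*(k:ℝ)) - Real.log c :=
          Real.log_div (by positivity) hcpos.ne'
        have hdiv : ((N:ℕ):ℝ) / (2*(k:ℝ)/c) = ((N:ℕ):ℝ) * c / (2*(k:ℝ)) := by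
          field_simp
        rw [hlogm, hdiv] at htan
        obtain ⟨u, hu⟩ : ∃ u : ℝ, u = ((N:ℕ):ℝ) * c / (2*(k:ℝ)) := ⟨_, rfl⟩
        rw [← hu] at htan
        have heq : 2*(k:ℝ) * u = ((N:ℕ):ℝ) * c := by
          rw [hu]
          field_simp
        have htan2 : 2*(k:ℝ) * Real.log ((N:ℕ):ℝ)
            ≤ 2*(k:ℝ)*Real.log (2*(k:ℝ)) - 2*(k:ℝ)*Real.log c + ((N:ℕ):ℝ)*c - 2*(k:ℝ) := by
          have hmul := mul_le_mul_of_nonneg_left htan (by positivity : (0:ℝ) ≤ 2*(k:ℝ))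
          linarith [hmul, heq]
        have hlf := log_fact_ge k hk2
        have hlc := log_c_ge
        have hlcm : - (2*(k:ℝ)) * Real.log c ≤ 2*(k:ℝ) * 1.75 := by
          have : (-1.75:ℝ) ≤ Real.log c := by rw [hc]; exact log_c_ge
          nlinarith [this]
        have hl2u : Real.log 2 < 0.6931471808 := by
          have := Real.log_two_lt_d9; linarith
        have hl2l : (0.6931471803:ℝ) < Real.log 2 := Real.log_two_gt_d9
        have hlog4 : Real.log 4 = 2 * Real.log 2 := by
          rw [show (4:ℝ) = 2^2 by norm_num, Real.log_pow]; push_cast; ring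
        have hNc : ((N:ℕ):ℝ) * c = (n:ℝ)*Real.log 2 - (n:ℝ)/2 - Real.log 2 + 1/2 := by
          rw [hNn, hc]; ring
        -- final linear arithmetic
        rw [hlog4]
        have hlfF : 0.6932 + (k:ℝ) * Real.log (2*(k:ℝ)) - 0.25*(k:ℝ) ≤ Real.log F := by
          rw [hF]; exact hlf
        linarith [htan2, hlfF, hlcm, hNc, hNn, hkR]
      -- conclude
      have step1 : 2 * Real.exp ((n:ℝ)/2) * ((∑ i ∈ range (2*k+1), (n-1).choose i : ℕ) : ℝ) * F
          ≤ 4 * Real.exp ((n:ℝ)/2) * ((N:ℕ):ℝ)^(2*k) := by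
        calc 2 * Real.exp ((n:ℝ)/2) * ((∑ i ∈ range (2*k+1), (n-1).choose i : ℕ) : ℝ) * F
            ≤ 2 * Real.exp ((n:ℝ)/2) * (2 * (N.choose (2*k) : ℝ)) * F := by
              apply mul_le_mul_of_nonneg_right _ hFpos.le
              apply mul_le_mul_of_nonneg_left hS2 (by positivity)
          _ = 4 * Real.exp ((n:ℝ)/2) * ((N.choose (2*k) : ℝ) * F) := by ring
          _ ≤ 4 * Real.exp ((n:ℝ)/2) * ((N:ℕ):ℝ)^(2*k) := by
              apply mul_le_mul_of_nonneg_left hCF (by positivity)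
      have step2 : 2 * Real.exp ((n:ℝ)/2) * ((∑ i ∈ range (2*k+1), (n-1).choose i : ℕ) : ℝ) * F
          < (2^n * Real.exp (2*(k:ℝ)) * F) * F := by
        calc 2 * Real.exp ((n:ℝ)/2) * ((∑ i ∈ range (2*k+1), (n-1).choose i : ℕ) : ℝ) * F
            ≤ 4 * Real.exp ((n:ℝ)/2) * ((N:ℕ):ℝ)^(2*k) := step1
          _ < 2^n * Real.exp (2*(k:ℝ)) * F^2 := key
          _ = (2^n * Real.exp (2*(k:ℝ)) * F) * F := by ring
      exact lt_of_mul_lt_mul_right step2 hFpos.le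

-- ===================== Pattern counting (Cover / Dudley) =====================

def PattOn {α : Type*} (V : Submodule ℝ (α → ℝ)) (A : Finset α) : Set (Finset α) :=
  {B | B ⊆ A ∧ ∃ f ∈ V, (∀ a ∈ A, f a ≠ 0) ∧ ∀ a ∈ A, (a ∈ B ↔ 0 < f a)}

lemma pattOn_finite {α : Type*} (V : Submodule ℝ (α → ℝ)) (A : Finset α) :
    (PattOn V A).Finite := by
  apply Set.Finite.subset A.powerset.finite_toSet
  intro B hB
  simpa [Finset.mem_powerset] using hB.1

lemma sum_choose_zero_left (r : ℕ) (hr : 1 ≤ r) : ∑ i ∈ range r, Nat.choose 0 i = 1 := by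
  obtain ⟨s, rfl⟩ : ∃ s, r = s + 1 := ⟨r - 1, by omega⟩
  induction s with
  | zero => simp
  | succ s ih =>
    rw [Finset.sum_range_succ, ih (by omega)]
    simp [Nat.choose_eq_zero_of_lt]

lemma pattOn_ncard_le {α : Type*} [DecidableEq α] :
    ∀ (n : ℕ) (A : Finset α), A.card ≤ n → ∀ (r : ℕ), 1 ≤ r →
      ∀ (V : Submodule ℝ (α → ℝ)), FiniteDimensional ℝ V → finrank ℝ V ≤ r →
      (PattOn V A).ncard ≤ 2 * ∑ i ∈ range r, (A.card - 1).choose i := by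
  intro n
  induction n with
  | zero =>
    intro A hA r hr V _ _
    have hA0 : A = ∅ := Finset.card_eq_zero.mp (by omega)
    subst hA0
    have hsub : PattOn V (∅ : Finset α) ⊆ {(∅ : Finset α)} := by
      intro B hB
      simpa using Finset.subset_empty.mp hB.1
    calc (PattOn V (∅:Finset α)).ncard ≤ ({(∅ : Finset α)} : Set (Finset α)).ncard :=
          Set.ncard_le_ncard hsub (Set.finite_singleton _)
      _ = 1 := Set.ncard_singleton _
      _ ≤ 2 * ∑ i ∈ range r, ((∅:Finset α).card - 1).choose i := by
        simp only [Finset.card_empty]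
        rw [show (0:ℕ) - 1 = 0 from rfl, sum_choose_zero_left r hr]
        omega
  | succ n IH =>
    intro A hcard r hr V hFD hrank
    rcases le_or_gt A.card 1 with hA1 | hA1
    · -- small A : trivial bound
      have hsub : PattOn V A ⊆ ↑A.powerset := by
        intro B hB
        simpa [Finset.mem_powerset] using hB.1
      have h1 : (PattOn V A).ncard ≤ 2 := by
        calc (PattOn V A).ncard ≤ (↑A.powerset : Set (Finset α)).ncard :=
              Set.ncard_le_ncard hsub A.powerset.finite_toSet
          _ = A.powerset.card := Set.ncard_coe_finset _
          _ = 2 ^ A.card := Finset.card_powerset A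
          _ ≤ 2 := by interval_cases h : A.card <;> norm_num
      have h2 : A.card - 1 = 0 := by omega
      rw [h2, sum_choose_zero_left r hr]
      omega
    · -- A.card ≥ 2
      obtain ⟨x0, hx0⟩ := Finset.card_pos.mp (by omega : 0 < A.card)
      set A' := A.erase x0 with hA'
      have hA'card : A'.card = A.card - 1 := Finset.card_erase_of_mem hx0
      have hA'A : A' ⊆ A := Finset.erase_subset _ _
      by_cases hall : ∀ f ∈ V, f x0 = 0
      · have hempty : PattOn V A = ∅ := by
          ext B
          simp only [Set.mem_empty_iff_false, iff_false]
          rintro ⟨hBA, f, hfV, hfnz, hfmem⟩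
          exact hfnz x0 hx0 (hall f hfV)
        rw [hempty]
        simp
      · push_neg at hall
        obtain ⟨g0, hg0V, hg0⟩ := hall
        -- evaluation functional
        set φ : V →ₗ[ℝ] ℝ := (LinearMap.proj x0).comp V.subtype with hφ
        have hφapp : ∀ f : V, φ f = (f : α → ℝ) x0 := fun f => rfl
        set V₀ : Submodule ℝ (α → ℝ) := Submodule.map V.subtype (LinearMap.ker φ) with hV₀
        have hV₀le : V₀ ≤ V := Submodule.map_subtype_le _ _
        have hV₀0 : ∀ h ∈ V₀, h x0 = 0 := by
          rintro h ⟨⟨h', hh'⟩, hker, rfl⟩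
          exact hker
        have hV₀FD : FiniteDimensional ℝ V₀ := by
          have : FiniteDimensional ℝ (LinearMap.ker φ) := inferInstance
          exact Module.Finite.map _ _
        have hrank₀ : finrank ℝ V₀ ≤ r - 1 := by
          have h1 : finrank ℝ V₀ = finrank ℝ (LinearMap.ker φ) :=
            Submodule.finrank_map_subtype_eq _ _
          have h2 := LinearMap.finrank_range_add_finrank_ker φ
          have h3 : LinearMap.range φ = ⊤ := by
            rw [LinearMap.range_eq_top]
            intro y
            refine ⟨(y / g0 x0) • ⟨g0, hg0V⟩, ?_⟩
            rw [map_smul, hφapp]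
            simp only [smul_eq_mul]
            field_simp
          rw [h3] at h2
          have h4 : finrank ℝ (⊤ : Submodule ℝ ℝ) = 1 := by
            rw [finrank_top]; exact finrank_self ℝ
          omega
        -- the two restriction sets
        set S0 : Set (Finset α) := PattOn V A ∩ {B | x0 ∉ B} with hS0
        set S1 : Set (Finset α) := PattOn V A ∩ {B | x0 ∈ B} with hS1
        have hfinS := pattOn_finite V A
        have hfinS0 : S0.Finite := hfinS.subset Set.inter_subset_left
        have hfinS1 : S1.Finite := hfinS.subset Set.inter_subset_left
        have hsplit : PattOn V A = S0 ∪ S1 := by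
          ext B; by_cases h : x0 ∈ B <;> simp [hS0, hS1, h]
        have hdisj : Disjoint S0 S1 := by
          rw [Set.disjoint_left]
          rintro B ⟨_, h0⟩ ⟨_, h1⟩
          exact h0 h1
        set er : Finset α → Finset α := fun B => B.erase x0 with her
        set E0 : Set (Finset α) := er '' S0 with hE0
        set E1 : Set (Finset α) := er '' S1 with hE1
        have hinj0 : Set.InjOn er S0 := by
          intro B hB B' hB' h
          have h' : B.erase x0 = B'.erase x0 := h
          rwa [Finset.erase_eq_self.mpr hB.2, Finset.erase_eq_self.mpr hB'.2] at h'
        have hinj1 : Set.InjOn er S1 := by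
          intro B hB B' hB' h
          have h' : B.erase x0 = B'.erase x0 := h
          have h'' : insert x0 (B.erase x0) = insert x0 (B'.erase x0) := by rw [h']
          rwa [Finset.insert_erase hB.2, Finset.insert_erase hB'.2] at h''
        -- restriction stays a pattern
        have hrestrict : ∀ B ∈ PattOn V A, er B ∈ PattOn V A' := by
          rintro B ⟨hBA, f, hfV, hfnz, hfmem⟩
          refine ⟨Finset.erase_subset_erase x0 hBA, f, hfV, fun a ha => hfnz a (hA'A ha), ?_⟩
          intro a ha
          have hax : a ≠ x0 := Finset.ne_of_mem_erase ha
          have haA : a ∈ A := hA'A ha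
          show a ∈ B.erase x0 ↔ 0 < f a
          simp only [Finset.mem_erase, hax, ne_eq, not_false_eq_true, true_and]
          exact hfmem a haA
        have hE0T : E0 ⊆ PattOn V A' := by
          rintro _ ⟨B, hB, rfl⟩; exact hrestrict B hB.1
        have hE1T : E1 ⊆ PattOn V A' := by
          rintro _ ⟨B, hB, rfl⟩; exact hrestrict B hB.1
        -- the interpolation: doubly covered patterns lie in PattOn V₀ A'
        have hE01 : E0 ∩ E1 ⊆ PattOn V₀ A' := by
          rintro P ⟨⟨B0, hB0, hP0⟩, ⟨B1, hB1, hP1⟩⟩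
          obtain ⟨⟨hB0p, hB0x⟩⟩ : B0 ∈ S0 ∧ True := ⟨hB0, trivial⟩
          obtain ⟨⟨hB1p, hB1x⟩⟩ : B1 ∈ S1 ∧ True := ⟨hB1, trivial⟩
          obtain ⟨hB0A, g, hgV, hgnz, hgmem⟩ := hB0p
          obtain ⟨hB1A, f, hfV, hfnz, hfmem⟩ := hB1p
          have hP0' : B0.erase x0 = P := hP0
          have hP1' : B1.erase x0 = P := hP1
          have hPB0 : P = B0 := by
            rw [← hP0', Finset.erase_eq_self.mpr hB0x]
          have hf0 : 0 < f x0 := (hfmem x0 hx0).mp hB1x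
          have hg0' : g x0 < 0 := by
            have h1 : ¬ (0 < g x0) := fun h => hB0x ((hgmem x0 hx0).mpr h)
            have h2 : g x0 ≠ 0 := hgnz x0 hx0
            cases lt_or_gt_of_ne h2 with
            | inl h => exact h
            | inr h => exact absurd h h1
          have hD : 0 < f x0 - g x0 := by linarith
          set t : ℝ := -g x0 / (f x0 - g x0) with ht
          set s : ℝ := f x0 / (f x0 - g x0) with hs
          have htpos : 0 < t := by
            rw [ht]; apply div_pos (by linarith) hD
          have hspos : 0 < s := by
            rw [hs]; apply div_pos hf0 hD
          set h : α → ℝ := t • f + s • g with hh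
          have hhV : h ∈ V := Submodule.add_mem _ (Submodule.smul_mem _ _ hfV)
            (Submodule.smul_mem _ _ hgV)
          have hhx0 : h x0 = 0 := by
            rw [hh]
            simp only [Pi.add_apply, Pi.smul_apply, smul_eq_mul]
            rw [ht, hs]
            field_simp
            ring
          have hhV₀ : h ∈ V₀ := by
            rw [hV₀]
            exact Submodule.mem_map.mpr ⟨⟨h, hhV⟩, hhx0, rfl⟩
          -- membership facts on A'
          have hkey : ∀ a ∈ A', (a ∈ P ↔ 0 < f a) ∧ (a ∈ P ↔ 0 < g a) := by
            intro a ha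
            have hax : a ≠ x0 := Finset.ne_of_mem_erase ha
            have haA : a ∈ A := hA'A ha
            constructor
            · rw [← hP1']
              simp only [Finset.mem_erase, hax, ne_eq, not_false_eq_true, true_and]
              exact hfmem a haA
            · rw [hPB0]; exact hgmem a haA
          refine ⟨?_, h, hhV₀, ?_, ?_⟩
          · rw [← hP1']; exact Finset.erase_subset_erase x0 hB1A
          · intro a ha
            rcases (hkey a ha) with ⟨hkf, hkg⟩
            by_cases hmem : a ∈ P
            · have h1 := hkf.mp hmem
              have h2 := hkg.mp hmem
              have : 0 < h a := by
                rw [hh]; simp only [Pi.add_apply, Pi.smul_apply, smul_eq_mul]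
                exact add_pos (mul_pos htpos h1) (mul_pos hspos h2)
              linarith
            · have h1 : f a < 0 := by
                have := hfnz a (hA'A ha)
                have h3 : ¬ 0 < f a := fun hc => hmem (hkf.mpr hc)
                cases lt_or_gt_of_ne this with
                | inl h => exact h
                | inr h => exact absurd h h3
              have h2 : g a < 0 := by
                have := hgnz a (hA'A ha)
                have h3 : ¬ 0 < g a := fun hc => hmem (hkg.mpr hc)
                cases lt_or_gt_of_ne this with
                | inl h => exact h
                | inr h => exact absurd h h3
              have : h a < 0 := by
                rw [hh]; simp only [Pi.add_apply, Pi.smul_apply, smul_eq_mul]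
                have := mul_neg_of_pos_of_neg htpos h1
                have := mul_neg_of_pos_of_neg hspos h2
                linarith
              linarith
          · intro a ha
            rcases (hkey a ha) with ⟨hkf, hkg⟩
            constructor
            · intro hmem
              have h1 := hkf.mp hmem
              have h2 := hkg.mp hmem
              rw [hh]; simp only [Pi.add_apply, Pi.smul_apply, smul_eq_mul]
              exact add_pos (mul_pos htpos h1) (mul_pos hspos h2)
            · intro hpos
              by_contra hmem
              have h1 : f a < 0 := by
                have := hfnz a (hA'A ha)
                have h3 : ¬ 0 < f a := fun hc => hmem (hkf.mpr hc)
                cases lt_or_gt_of_ne this with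
                | inl h => exact h
                | inr h => exact absurd h h3
              have h2 : g a < 0 := by
                have := hgnz a (hA'A ha)
                have h3 : ¬ 0 < g a := fun hc => hmem (hkg.mpr hc)
                cases lt_or_gt_of_ne this with
                | inl h => exact h
                | inr h => exact absurd h h3
              have : h a < 0 := by
                rw [hh]; simp only [Pi.add_apply, Pi.smul_apply, smul_eq_mul]
                have := mul_neg_of_pos_of_neg htpos h1
                have := mul_neg_of_pos_of_neg hspos h2
                linarith
              rw [hh] at hpos
              linarith
        -- counting
        have hfinE0 : E0.Finite := hfinS0.image _
        have hfinE1 : E1.Finite := hfinS1.image _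
        have hfinT1 := pattOn_finite V A'
        have hfinT2 := pattOn_finite V₀ A'
        have hc0 : S0.ncard = E0.ncard := (Set.ncard_image_of_injOn hinj0).symm
        have hc1 : S1.ncard = E1.ncard := (Set.ncard_image_of_injOn hinj1).symm
        have hcount1 : (PattOn V A).ncard = S0.ncard + S1.ncard := by
          rw [hsplit]
          exact Set.ncard_union_eq hdisj hfinS0 hfinS1
        have hcount2 : (E0 ∪ E1).ncard + (E0 ∩ E1).ncard = E0.ncard + E1.ncard :=
          Set.ncard_union_add_ncard_inter E0 E1 hfinE0 hfinE1
        have hcount3 : (E0 ∪ E1).ncard ≤ (PattOn V A').ncard :=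
          Set.ncard_le_ncard (Set.union_subset hE0T hE1T) hfinT1
        have hcount4 : (E0 ∩ E1).ncard ≤ (PattOn V₀ A').ncard :=
          Set.ncard_le_ncard hE01 hfinT2
        -- apply induction hypotheses
        have hA'n : A'.card ≤ n := by omega
        have hT1bound : (PattOn V A').ncard ≤ 2 * ∑ i ∈ range r, (A'.card - 1).choose i :=
          IH A' hA'n r hr V hFD hrank
        have hT2bound : (PattOn V₀ A').ncard ≤ 2 * ∑ i ∈ range (r-1), (A'.card - 1).choose i := by
          rcases Nat.lt_or_ge r 2 with hr1 | hr2
          · -- r = 1 : V₀ = ⊥ and A' nonempty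
            have hre : r = 1 := by omega
            have hV₀bot : V₀ = ⊥ := by
              have : finrank ℝ V₀ = 0 := by omega
              exact (Submodule.finrank_eq_zero (R := ℝ) (M := α → ℝ)).mp this
            have hA'ne : A'.Nonempty := Finset.card_pos.mp (by omega)
            obtain ⟨a0, ha0⟩ := hA'ne
            have hem : PattOn V₀ A' = ∅ := by
              ext B
              simp only [Set.mem_empty_iff_false, iff_false]
              rintro ⟨hBA, f, hfV, hfnz, hfmem⟩
              rw [hV₀bot, Submodule.mem_bot] at hfV
              exact hfnz a0 ha0 (by rw [hfV]; rfl)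
            rw [hem, hre]
            simp
          · exact IH A' hA'n (r-1) (by omega) V₀ hV₀FD hrank₀
        -- pascal recombination
        obtain ⟨s', rfl⟩ : ∃ s', r = s' + 1 := ⟨r - 1, by omega⟩
        have hm : A'.card - 1 + 1 = A.card - 1 := by omega
        have hpascal := pascal_sum (A'.card - 1) s'
        rw [hm] at hpascal
        have hs'r : s' + 1 - 1 = s' := by omega
        rw [hs'r] at hT2bound
        calc (PattOn V A).ncard = S0.ncard + S1.ncard := hcount1
          _ = E0.ncard + E1.ncard := by rw [hc0, hc1]
          _ = (E0 ∪ E1).ncard + (E0 ∩ E1).ncard := hcount2.symm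
          _ ≤ (PattOn V A').ncard + (PattOn V₀ A').ncard := add_le_add hcount3 hcount4
          _ ≤ 2 * ∑ i ∈ range (s'+1), (A'.card - 1).choose i
              + 2 * ∑ i ∈ range s', (A'.card - 1).choose i := add_le_add hT1bound hT2bound
          _ = 2 * ∑ i ∈ range (s'+1), (A.card - 1).choose i := by rw [hpascal]; ring


-- ===================== reduction to patterns =====================

lemma scheffe_iff {d : ℕ} (μ ν x : Fin d → ℝ) :
    gaussDensity ν x < gaussDensity μ x ↔ 0 < ∑ i, ((x i - ν i)^2 - (x i - μ i)^2) := by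
  unfold gaussDensity
  have hpos : (0:ℝ) < (2 * Real.pi) ^ (-(d : ℝ) / 2) := by
    apply Real.rpow_pos_of_pos
    positivity
  rw [mul_lt_mul_iff_right₀ hpos, Real.exp_lt_exp]
  rw [Finset.sum_sub_distrib]
  constructor <;> intro h <;> linarith

lemma mem_pattOn_of_pattern {α : Type*} [DecidableEq α] (V : Submodule ℝ (α → ℝ))
    (h1 : (fun _ => (1:ℝ)) ∈ V) (A B : Finset α) (hBA : B ⊆ A) (f : α → ℝ) (hf : f ∈ V)
    (hpat : ∀ a ∈ A, (a ∈ B ↔ 0 < f a)) : B ∈ PattOn V A := by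
  rcases B.eq_empty_or_nonempty with hBe | hBne
  · refine ⟨hBA, (-1 : ℝ) • (fun _ => (1:ℝ)), Submodule.smul_mem _ _ h1, ?_, ?_⟩
    · intro a _; simp
    · intro a ha
      subst hBe
      simp
  · obtain ⟨b0, hb0, hmin⟩ := B.exists_min_image f hBne
    have hb0pos : 0 < f b0 := (hpat b0 (hBA hb0)).mp hb0
    set g : α → ℝ := f + (-(f b0/2)) • (fun _ => (1:ℝ)) with hg
    have hgV : g ∈ V := Submodule.add_mem _ hf (Submodule.smul_mem _ _ h1)
    have hgval : ∀ a, g a = f a - f b0/2 := by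
      intro a; rw [hg]; simp; ring
    refine ⟨hBA, g, hgV, ?_, ?_⟩
    · intro a ha
      rw [hgval a]
      by_cases hmem : a ∈ B
      · have := hmin a hmem
        intro hzero; linarith
      · have : ¬ 0 < f a := fun hc => hmem ((hpat a ha).mpr hc)
        intro hzero; linarith
    · intro a ha
      rw [hgval a]
      constructor
      · intro hmem
        have := hmin a hmem
        linarith
      · intro hpos
        by_contra hmem
        have : ¬ 0 < f a := fun hc => hmem ((hpat a ha).mpr hc)
        linarith

-- the coordinate span space
def VT (d : ℕ) (T : Finset (Fin d)) : Submodule ℝ ((Fin d → ℝ) → ℝ) :=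
  Submodule.span ℝ ({fun _ => (1:ℝ)} ∪ (fun (i : Fin d) => (fun x : Fin d → ℝ => x i)) '' (T : Set (Fin d)))

lemma VT_genset_finite (d : ℕ) (T : Finset (Fin d)) :
    ({fun _ => (1:ℝ)} ∪ (fun (i : Fin d) => (fun x : Fin d → ℝ => x i)) '' (T : Set (Fin d))).Finite :=
  (Set.finite_singleton _).union (T.finite_toSet.image _)

lemma VT_one_mem (d : ℕ) (T : Finset (Fin d)) : (fun _ => (1:ℝ)) ∈ VT d T :=
  Submodule.subset_span (Or.inl rfl)

lemma VT_fd (d : ℕ) (T : Finset (Fin d)) : FiniteDimensional ℝ (VT d T) :=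
  FiniteDimensional.span_of_finite ℝ (VT_genset_finite d T)

lemma VT_rank (d : ℕ) (T : Finset (Fin d)) : finrank ℝ (VT d T) ≤ T.card + 1 := by
  classical
  have hfin := VT_genset_finite d T
  have h1 : VT d T = Submodule.span ℝ (hfin.toFinset : Set ((Fin d → ℝ) → ℝ)) := by
    rw [Set.Finite.coe_toFinset]
    rfl
  have h2 : finrank ℝ (Submodule.span ℝ (hfin.toFinset : Set ((Fin d → ℝ) → ℝ)))
      ≤ hfin.toFinset.card := finrank_span_finset_le_card hfin.toFinset
  have h3 : hfin.toFinset.card ≤ T.card + 1 := by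
    rw [← Set.ncard_eq_toFinset_card _ hfin]
    calc ({fun _ => (1:ℝ)} ∪ (fun (i : Fin d) => (fun x : Fin d → ℝ => x i)) '' (T : Set (Fin d))).ncard
        ≤ (Set.singleton (fun _ => (1:ℝ) : (Fin d → ℝ) → ℝ)).ncard
          + ((fun (i : Fin d) => (fun x : Fin d → ℝ => x i)) '' (T : Set (Fin d))).ncard :=
          Set.ncard_union_le _ _
      _ ≤ 1 + T.card := by
          apply add_le_add (le_of_eq (Set.ncard_singleton _))
          calc ((fun (i : Fin d) => (fun x : Fin d → ℝ => x i)) '' (T : Set (Fin d))).ncard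
              ≤ (T : Set (Fin d)).ncard := Set.ncard_image_le T.finite_toSet
            _ = T.card := Set.ncard_coe_finset T
      _ = T.card + 1 := by ring
  rw [h1]
  exact le_trans h2 h3

lemma f_mem_VT {d : ℕ} (μ ν : Fin d → ℝ) (T : Finset (Fin d)) (hT : ∀ i, μ i ≠ ν i → i ∈ T) :
    (fun x : Fin d → ℝ => ∑ i, ((x i - ν i)^2 - (x i - μ i)^2)) ∈ VT d T := by
  classical
  have hfeq : (fun x : Fin d → ℝ => ∑ i, ((x i - ν i)^2 - (x i - μ i)^2))
      = (∑ i, (ν i^2 - μ i^2)) • (fun _ => (1:ℝ))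
        + ∑ i ∈ T, (2*(μ i - ν i)) • (fun x : Fin d → ℝ => x i) := by
    funext x
    simp only [Pi.add_apply, Pi.smul_apply, smul_eq_mul, Finset.sum_apply]
    have h1 : ∀ i : Fin d, (x i - ν i)^2 - (x i - μ i)^2
        = 2*(μ i - ν i)*(x i) + (ν i^2 - μ i^2) := by intro i; ring
    rw [Finset.sum_congr rfl (fun i _ => h1 i), Finset.sum_add_distrib]
    have h2 : ∑ i ∈ T, 2*(μ i - ν i)*(x i) = ∑ i, 2*(μ i - ν i)*(x i) := by
      apply Finset.sum_subset (Finset.subset_univ T)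
      intro i _ hiT
      have hei : μ i = ν i := by
        by_contra hne; exact hiT (hT i hne)
      rw [hei]; ring
    rw [← h2]
    ring
  rw [hfeq]
  apply Submodule.add_mem
  · exact Submodule.smul_mem _ _ (VT_one_mem d T)
  · apply Submodule.sum_mem
    intro i hi
    exact Submodule.smul_mem _ _ (Submodule.subset_span (Or.inr ⟨i, hi, rfl⟩))

-- ===================== main counting =====================

lemma main_count (d k : ℕ) (A : Finset (Fin d → ℝ)) (hA : ShattersSet (scheffeSets d k) A) :
    2 ^ A.card ≤ (Nat.choose d (min (2*k) d))
      * (2 * ∑ i ∈ range (min (2*k) d + 1), (A.card - 1).choose i) := by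
  classical
  set m := min (2*k) d with hm
  have key : ∀ B ∈ A.powerset, ∃ T ∈ Finset.powersetCard m (Finset.univ : Finset (Fin d)),
      B ∈ (pattOn_finite (VT d T) A).toFinset := by
    intro B hB
    rw [Finset.mem_powerset] at hB
    obtain ⟨w, hw, hmem⟩ := hA B hB
    obtain ⟨μ, ν, hμ, hν, rfl⟩ := hw
    set D := Finset.univ.filter (fun i => μ i ≠ ν i) with hD
    have hDcard : D.card ≤ m := by
      rw [hm]
      apply Nat.le_min.mpr
      constructor
      · have hsub : D ⊆ Finset.univ.filter (fun i => μ i ≠ 0)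
            ∪ Finset.univ.filter (fun i => ν i ≠ 0) := by
          intro i hi
          simp only [hD, Finset.mem_filter, Finset.mem_univ, true_and] at hi
          simp only [Finset.mem_union, Finset.mem_filter, Finset.mem_univ, true_and]
          by_contra hcon
          push_neg at hcon
          exact hi (by rw [hcon.1, hcon.2])
        calc D.card ≤ _ := Finset.card_le_card hsub
          _ ≤ _ + _ := Finset.card_union_le _ _
          _ ≤ k + k := add_le_add hμ hν
          _ = 2*k := by ring
      · calc D.card ≤ Finset.univ.card := Finset.card_le_univ D
          _ = d := by rw [Finset.card_univ, Fintype.card_fin]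
    have hmd : m ≤ Finset.univ.card (α := Fin d) := by
      rw [Finset.card_univ, Fintype.card_fin, hm]
      exact min_le_right _ _
    obtain ⟨T, hDT, _, hTcard⟩ :=
      Finset.exists_subsuperset_card_eq (Finset.subset_univ D) hDcard hmd
    refine ⟨T, ?_, ?_⟩
    · rw [Finset.mem_powersetCard]
      exact ⟨Finset.subset_univ T, hTcard⟩
    · rw [Set.Finite.mem_toFinset]
      apply mem_pattOn_of_pattern (VT d T) (VT_one_mem d T) A B hB
        (fun x : Fin d → ℝ => ∑ i, ((x i - ν i)^2 - (x i - μ i)^2))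
        (f_mem_VT μ ν T (fun i hne => hDT (by simp [hD, hne])))
      intro a ha
      rw [hmem a ha]
      show _ ↔ 0 < _
      rw [Set.mem_setOf_eq]
      exact scheffe_iff μ ν a
  have hsub : A.powerset ⊆ (Finset.powersetCard m (Finset.univ : Finset (Fin d))).biUnion
      (fun T => (pattOn_finite (VT d T) A).toFinset) := by
    intro B hB
    rw [Finset.mem_biUnion]
    exact key B hB
  calc 2 ^ A.card = A.powerset.card := (Finset.card_powerset A).symm
    _ ≤ _ := Finset.card_le_card hsub
    _ ≤ ∑ T ∈ Finset.powersetCard m (Finset.univ : Finset (Fin d)),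
          (pattOn_finite (VT d T) A).toFinset.card := Finset.card_biUnion_le
    _ ≤ ∑ _T ∈ Finset.powersetCard m (Finset.univ : Finset (Fin d)),
          (2 * ∑ i ∈ range (m+1), (A.card - 1).choose i) := by
        apply Finset.sum_le_sum
        intro T hT
        have hTcard : T.card = m := (Finset.mem_powersetCard.mp hT).2
        have hb := pattOn_ncard_le A.card A le_rfl (m+1) (by omega) (VT d T) (VT_fd d T)
          (by rw [← hTcard] at *; exact VT_rank d T)
        rwa [Set.ncard_eq_toFinset_card _ (pattOn_finite (VT d T) A)] at hb
    _ = (Finset.powersetCard m (Finset.univ : Finset (Fin d))).card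
          * (2 * ∑ i ∈ range (m+1), (A.card - 1).choose i) := by
        rw [Finset.sum_const, smul_eq_mul]
    _ = Nat.choose d m * (2 * ∑ i ∈ range (m+1), (A.card - 1).choose i) := by
        rw [Finset.card_powersetCard, Finset.card_univ, Fintype.card_fin]


/-- The family of Scheffé sets of `d`-dimensional identity-covariance Gaussians with
`k`-sparse means has VC dimension at most `4k·log(de)`: any finite set it shatters has
cardinality at most `4k·log(de)`. -/
theorem stmt4 (d k : ℕ) (A : Finset (Fin d → ℝ)) (hA : ShattersSet (scheffeSets d k) A) :
    (A.card : ℝ) ≤ 4 * k * Real.log (d * Real.exp 1) := by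
  classical
  -- degenerate cases: every Scheffé set forced empty when d = 0 or k = 0
  have hdeg : ∀ (hdk : d = 0 ∨ k = 0), A = ∅ := by
    intro hdk
    by_contra hne
    obtain ⟨a, ha⟩ := Finset.nonempty_of_ne_empty hne
    obtain ⟨w, hw, hmem⟩ := hA A (subset_refl A)
    obtain ⟨μ, ν, hμ, hν, rfl⟩ := hw
    have hμν : μ = ν := by
      rcases hdk with hd0 | hk0
      · subst hd0
        exact Subsingleton.elim μ ν
      · subst hk0
        have hz : ∀ (ξ : Fin d → ℝ), Sparse 0 ξ → ξ = fun _ => 0 := by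
          intro ξ hξ
          funext i
          by_contra hne'
          have : i ∈ Finset.univ.filter fun j => ξ j ≠ 0 := by
            simp [hne']
          have hcard := Finset.card_pos.mpr ⟨i, this⟩
          unfold Sparse at hξ
          omega
        rw [hz μ hμ, hz ν hν]
    have := (hmem a ha).mp ha
    rw [Set.mem_setOf_eq, hμν] at this
    exact lt_irrefl _ this
  rcases Nat.eq_zero_or_pos d with hd0 | hd
  · rw [hdeg (Or.inl hd0), hd0]
    simp
  rcases Nat.eq_zero_or_pos k with hk0 | hk
  · rw [hdeg (Or.inr hk0), hk0]
    simp
  -- main case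
  have hlogd : (0:ℝ) ≤ Real.log d := Real.log_nonneg (by exact_mod_cast hd)
  have hRHS : 4 * (k:ℝ) * Real.log (d * Real.exp 1) = 4*k*(Real.log d + 1) := by
    rw [Real.log_mul (by positivity) (Real.exp_ne_zero 1), Real.log_exp]
  rw [hRHS]
  have hcount := main_count d k A hA
  set n := A.card with hn
  rcases le_or_gt d (2*k) with hdk | hdk
  · -- dense case : n ≤ d + 1
    have hmind : min (2*k) d = d := min_eq_right hdk
    rw [hmind, Nat.choose_self, one_mul] at hcount
    have hnd : n ≤ d + 1 := by
      by_contra hcon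
      push_neg at hcon
      have h1 : ∑ i ∈ range (d+1), (n-1).choose i < 2^(n-1) :=
        sum_choose_lt_pow n d (by omega) (by omega)
      have h2 : 2^n ≤ 2 * ∑ i ∈ range (d+1), (n-1).choose i := hcount
      have h3 : 2 * ∑ i ∈ range (d+1), (n-1).choose i < 2 * 2^(n-1) := by omega
      have h4 : 2 * 2^(n-1) = 2^n := by
        rw [← pow_succ']
        congr 1
        omega
      omega
    have hkR : (1:ℝ) ≤ (k:ℝ) := by exact_mod_cast hk
    calc (n:ℝ) ≤ (d:ℝ) + 1 := by exact_mod_cast hnd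
      _ ≤ 2*(k:ℝ) + 1 := by
          have : (d:ℝ) ≤ 2*k := by exact_mod_cast hdk
          linarith
      _ ≤ 4*(k:ℝ) := by linarith
      _ ≤ 4*k*(Real.log d + 1) := by nlinarith [hlogd]
  · -- sparse case : use star
    have hmin2k : min (2*k) d = 2*k := min_eq_left (by omega)
    rw [hmin2k] at hcount
    by_contra hcon
    push_neg at hcon
    have hn1 : 1 ≤ n := by
      by_contra hn0
      push_neg at hn0
      have : n = 0 := by omega
      rw [this] at hcon
      push_cast at hcon
      nlinarith [hlogd, (show (1:ℝ) ≤ (k:ℝ) by exact_mod_cast hk)]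
    -- d^{2k} < exp(n/2 - 2k)
    have hdexp : ((d:ℝ))^(2*k) < Real.exp ((n:ℝ)/2 - 2*(k:ℝ)) := by
      have h1 : ((d:ℝ))^(2*k) = Real.exp ((2*k : ℕ) * Real.log d) := by
        rw [Real.exp_nat_mul, Real.exp_log (by exact_mod_cast hd)]
      rw [h1]
      apply Real.exp_lt_exp.mpr
      push_cast
      nlinarith [hcon]
    -- assemble contradiction with star
    set S : ℝ := ((∑ i ∈ range (2*k+1), (n-1).choose i : ℕ) : ℝ) with hS
    have hSpos : (1:ℝ) ≤ S := by
      rw [hS]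
      have : 1 ≤ ∑ i ∈ range (2*k+1), (n-1).choose i := by
        calc 1 = (n-1).choose 0 := by rw [Nat.choose_zero_right]
          _ ≤ ∑ i ∈ range (2*k+1), (n-1).choose i := by
              apply Finset.single_le_sum (f := fun i => (n-1).choose i) (fun i _ => Nat.zero_le _)
              simp
      exact_mod_cast this
    set F : ℝ := ((2*k).factorial : ℝ) with hF
    have hFpos : (0:ℝ) < F := by rw [hF]; exact_mod_cast Nat.factorial_pos _
    have hCd : ((d.choose (2*k) : ℕ) : ℝ) * F ≤ ((d:ℝ))^(2*k) := by
      have h1 : (2*k).factorial * d.choose (2*k) ≤ d^(2*k) := by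
        rw [← Nat.descFactorial_eq_factorial_mul_choose]
        exact Nat.descFactorial_le_pow _ _
      rw [hF]
      calc ((d.choose (2*k) : ℕ) : ℝ) * ((2*k).factorial : ℝ)
          = (((2*k).factorial * d.choose (2*k) : ℕ) : ℝ) := by push_cast; ring
        _ ≤ ((d^(2*k) : ℕ) : ℝ) := by exact_mod_cast h1
        _ = ((d:ℝ))^(2*k) := by push_cast; ring
    have hcountR : (2:ℝ)^n ≤ ((d.choose (2*k) : ℕ) : ℝ) * (2 * S) := by
      rw [hS]
      calc (2:ℝ)^n = ((2^n : ℕ) : ℝ) := by push_cast; ring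
        _ ≤ ((d.choose (2*k) * (2 * ∑ i ∈ range (2*k+1), (n-1).choose i) : ℕ) : ℝ) := by
            exact_mod_cast hcount
        _ = ((d.choose (2*k) : ℕ) : ℝ) * (2 * ((∑ i ∈ range (2*k+1), (n-1).choose i : ℕ) : ℝ)) := by
            push_cast; ring
    have hstar := star k n hk hn1
    rw [← hS, ← hF] at hstar
    -- chain
    have hchain1 : (2:ℝ)^n * F ≤ ((d:ℝ))^(2*k) * (2*S) := by
      calc (2:ℝ)^n * F ≤ (((d.choose (2*k) : ℕ) : ℝ) * (2*S)) * F := by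
            apply mul_le_mul_of_nonneg_right hcountR hFpos.le
        _ = (((d.choose (2*k) : ℕ) : ℝ) * F) * (2*S) := by ring
        _ ≤ ((d:ℝ))^(2*k) * (2*S) := by
            apply mul_le_mul_of_nonneg_right hCd (by linarith)
    have hchain2 : ((d:ℝ))^(2*k) * (2*S) < Real.exp ((n:ℝ)/2 - 2*(k:ℝ)) * (2*S) := by
      apply mul_lt_mul_of_pos_right hdexp (by linarith)
    have hexp_split : Real.exp ((n:ℝ)/2 - 2*(k:ℝ)) * Real.exp (2*(k:ℝ)) = Real.exp ((n:ℝ)/2) := by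
      rw [← Real.exp_add]; ring_nf
    have hepos : (0:ℝ) < Real.exp (2*(k:ℝ)) := Real.exp_pos _
    have hchain3 : (2:ℝ)^n * F * Real.exp (2*(k:ℝ)) < Real.exp ((n:ℝ)/2) * (2*S) := by
      calc (2:ℝ)^n * F * Real.exp (2*(k:ℝ))
          ≤ (((d:ℝ))^(2*k) * (2*S)) * Real.exp (2*(k:ℝ)) := by
            apply mul_le_mul_of_nonneg_right hchain1 hepos.le
        _ < (Real.exp ((n:ℝ)/2 - 2*(k:ℝ)) * (2*S)) * Real.exp (2*(k:ℝ)) := by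
            apply mul_lt_mul_of_pos_right hchain2 hepos
        _ = (Real.exp ((n:ℝ)/2 - 2*(k:ℝ)) * Real.exp (2*(k:ℝ))) * (2*S) := by ring
        _ = Real.exp ((n:ℝ)/2) * (2*S) := by rw [hexp_split]
    -- star says  2 * exp(n/2) * S < 2^n * exp(2k) * F
    nlinarith [hstar, hchain3]
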